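/- Let T(s) ∈ ℚ⟦s⟧ be the formal power series whose coefficient of sⁿ is T_n/n! for odd n and 0 for even n, where T_n is the number of alternating permutations of {0,…,n−1}. Then the formal derivative of T satisfies T'(s) = 1 + T(s)². -/

import Mathlib

/-- A permutation `σ` of `{0, 1, …, m−1}` is alternating if `σ 0 < σ 1 > σ 2 < σ 3 > …`,
i.e. `σ i < σ (i+1)` for even `i` and `σ i > σ (i+1)` for odd `i`. -/
def IsAlternating {m : ℕ} (σ : Equiv.Perm (Fin m)) : Prop :=
  ∀ (i : ℕ) (h : i + 1 < m),
    (Even i → σ ⟨i, Nat.lt_of_succ_lt h⟩ < σ ⟨i + 1, h⟩) ∧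
    (¬ Even i → σ ⟨i + 1, h⟩ < σ ⟨i, Nat.lt_of_succ_lt h⟩)

/-- `altCount m` is the number of alternating permutations of `{0, 1, …, m−1}`. -/
noncomputable def altCount (m : ℕ) : ℕ :=
  Nat.card {σ : Equiv.Perm (Fin m) // IsAlternating σ}

/-- The exponential generating function `T(s) = ∑_{n odd} T_n sⁿ/n!` of the numbers of
alternating permutations, as a formal power series over `ℚ`. -/
noncomputable def altEgf : PowerSeries ℚ :=
  PowerSeries.mk fun n => if Odd n then (altCount n : ℚ) / n.factorial else 0

open Finset

/-- Alternating condition for a general sequence into a linear order. -/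
def AltF {m : ℕ} {α : Type*} [LinearOrder α] (f : Fin m → α) : Prop :=
  ∀ (i : ℕ) (h : i + 1 < m),
    (Even i → f ⟨i, Nat.lt_of_succ_lt h⟩ < f ⟨i + 1, h⟩) ∧
    (¬ Even i → f ⟨i + 1, h⟩ < f ⟨i, Nat.lt_of_succ_lt h⟩)

lemma isAlternating_iff_altF {m : ℕ} (σ : Equiv.Perm (Fin m)) :
    IsAlternating σ ↔ AltF (⇑σ) := Iff.rfl

lemma altF_comp {m : ℕ} {α β : Type*} [LinearOrder α] [LinearOrder β]
    {g : α → β} (hg : StrictMono g) (f : Fin m → α) :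
    AltF (g ∘ f) ↔ AltF f := by
  unfold AltF
  simp [hg.lt_iff_lt]

/-- injectivity from range equals a finset of the right cardinality -/
lemma inj_of_range {m : ℕ} {α : Type*} [DecidableEq α] (f : Fin m → α) (s : Finset α)
    (hr : Set.range f = ↑s) (hc : s.card = m) : Function.Injective f := by
  have himg : Finset.image f Finset.univ = s := by
    apply Finset.coe_injective
    rw [Finset.coe_image, Finset.coe_univ, Set.image_univ, hr]
  have h2 : (Finset.univ.image f).card = (Finset.univ : Finset (Fin m)).card := by
    rw [himg, hc, Finset.card_univ, Fintype.card_fin]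
  have := Finset.card_image_iff.mp h2
  intro a b hab
  exact this (Finset.mem_univ a) (Finset.mem_univ b) hab

/-- counting alternating sequences with range a fixed finset -/
lemma card_altF {α : Type*} [LinearOrder α] (s : Finset α) {m : ℕ} (hm : s.card = m) :
    Nat.card {f : Fin m → α // Set.range f = ↑s ∧ AltF f} = altCount m := by
  classical
  rw [altCount, eq_comm]
  set e : Fin m ≃o {x // x ∈ s} := s.orderIsoOfFin hm with he
  have hmono : StrictMono (fun j : Fin m => (e j : α)) :=
    fun a b hab => by exact_mod_cast e.strictMono hab
  refine Nat.card_eq_of_bijective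
    (fun σ => ⟨fun j => (e (σ.1 j) : α), ?_, ?_⟩) ⟨?_, ?_⟩
  · -- range
    ext x
    simp only [Set.mem_range, Finset.mem_coe]
    constructor
    · rintro ⟨j, rfl⟩; exact (e (σ.1 j)).2
    · intro hx
      exact ⟨σ.1.symm (e.symm ⟨x, hx⟩), by simp⟩
  · -- AltF
    have := (altF_comp hmono (⇑σ.1)).mpr σ.2
    exact this
  · rintro ⟨σ, hσ⟩ ⟨τ, hτ⟩ h
    simp only [Subtype.mk.injEq] at h
    have : ∀ j, σ j = τ j := by
      intro j
      have := congrFun h j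
      exact e.injective (Subtype.ext this)
    apply Subtype.ext
    ext j
    exact congrArg Fin.val (this j)
  · rintro ⟨f, hr, ha⟩
    have hinj : Function.Injective f := inj_of_range f s hr hm
    have hmem : ∀ j, f j ∈ s := fun j => by
      have : f j ∈ Set.range f := Set.mem_range_self j
      rw [hr] at this; exact this
    set g : Fin m → Fin m := fun j => e.symm ⟨f j, hmem j⟩ with hg
    have hginj : Function.Injective g := by
      intro a b hab
      apply hinj
      exact congrArg Subtype.val (e.symm.injective hab)
    have hbij : Function.Bijective g := Finite.injective_iff_bijective.mp hginj
    refine ⟨⟨Equiv.ofBijective g hbij, ?_⟩, ?_⟩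
    · rw [isAlternating_iff_altF]
      have : (fun j => (e (Equiv.ofBijective g hbij j) : α)) = f := by
        funext j
        simp [Equiv.ofBijective, hg]
      rw [show (⇑(Equiv.ofBijective g hbij)) = g from rfl]
      have := (altF_comp hmono g)
      rw [show ((fun j : Fin m => (e j : α)) ∘ g) = f from by funext j; simp [hg]] at this
      exact this.mp ha
    · apply Subtype.ext
      funext j
      simp [Equiv.ofBijective, hg]

section Main

open Equiv

variable {n : ℕ}

/-- position of the maximum in an alternating permutation -/
lemma pos_max_odd (hn : Even n) (h0 : 0 < n) {σ : Equiv.Perm (Fin (n+1))}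
    (hσ : IsAlternating σ) : Odd ((σ.symm (Fin.last n)).val) := by
  set i := σ.symm (Fin.last n) with hi
  have hσi : σ i = Fin.last n := σ.apply_symm_apply _
  rw [← Nat.not_even_iff_odd]
  intro hev
  rcases lt_or_eq_of_le (Nat.lt_succ_iff.mp i.isLt) with hlt | heq
  · -- i.val < n
    have h1 : i.val + 1 < n + 1 := by omega
    have := (hσ i.val h1).1 hev
    have hieq : (⟨i.val, Nat.lt_of_succ_lt h1⟩ : Fin (n+1)) = i := Fin.eta i _
    rw [hieq, hσi] at this
    exact absurd (Fin.le_last _) (not_le.mpr this)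
  · -- i.val = n
    have h1 : (n - 1) + 1 < n + 1 := by omega
    have hodd : ¬ Even (n - 1) := by
      rw [Nat.not_even_iff_odd]
      obtain ⟨c, hc⟩ := hn
      exact ⟨c - 1, by omega⟩
    have := (hσ (n-1) h1).2 hodd
    have hieq : (⟨(n-1) + 1, h1⟩ : Fin (n+1)) = i := by
      apply Fin.ext; simp only [heq]; omega
    rw [hieq, hσi] at this
    exact absurd (Fin.le_last _) (not_le.mpr this)

/-- the set of values appearing before the maximum -/
noncomputable def key (σ : Equiv.Perm (Fin (n+1))) : Finset (Fin (n+1)) :=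
  (Finset.Iio (σ.symm (Fin.last n))).image σ

lemma card_key (σ : Equiv.Perm (Fin (n+1))) : (key σ).card = (σ.symm (Fin.last n)).val := by
  classical
  rw [key, Finset.card_image_of_injective _ σ.injective, Fin.card_Iio]

lemma mem_key {σ : Equiv.Perm (Fin (n+1))} {x : Fin (n+1)} :
    x ∈ key σ ↔ σ.symm x < σ.symm (Fin.last n) := by
  classical
  simp only [key, Finset.mem_image, Finset.mem_Iio]
  constructor
  · rintro ⟨y, hy, rfl⟩; simpa using hy
  · intro hx; exact ⟨σ.symm x, hx, σ.apply_symm_apply x⟩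

lemma last_not_mem_key (σ : Equiv.Perm (Fin (n+1))) : Fin.last n ∉ key σ := by
  rw [mem_key]; exact lt_irrefl _

end Main

section Fiber

open Finset

variable {n k : ℕ} {S : Finset (Fin (n+1))}

lemma key_val_eq {σ : Equiv.Perm (Fin (n+1))} (hkey : key σ = S) (hk : S.card = k) :
    (σ.symm (Fin.last n)).val = k := by
  rw [← card_key σ, hkey, hk]

lemma apply_k {σ : Equiv.Perm (Fin (n+1))} (hkey : key σ = S) (hk : S.card = k)
    (hkn : k ≤ n) : σ ⟨k, by omega⟩ = Fin.last n := by
  have hi := key_val_eq hkey hk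
  have h2 : (⟨k, by omega⟩ : Fin (n+1)) = σ.symm (Fin.last n) := Fin.ext hi.symm
  rw [h2, Equiv.apply_symm_apply]

lemma range_left {σ : Equiv.Perm (Fin (n+1))} (hkey : key σ = S) (hk : S.card = k)
    (hkn : k ≤ n) :
    Set.range (fun j : Fin k => σ ⟨j.val, by omega⟩) = ↑S := by
  have hi := key_val_eq hkey hk
  ext x
  simp only [Set.mem_range, Finset.mem_coe]
  constructor
  · rintro ⟨j, rfl⟩
    rw [← hkey, mem_key, Equiv.symm_apply_apply, Fin.lt_def, hi]
    exact j.isLt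
  · intro hx
    rw [← hkey, mem_key, Fin.lt_def, hi] at hx
    refine ⟨⟨(σ.symm x).val, hx⟩, ?_⟩
    rw [Fin.eta, Equiv.apply_symm_apply]

lemma range_right {σ : Equiv.Perm (Fin (n+1))} (hkey : key σ = S) (hk : S.card = k)
    (hkn : k ≤ n) :
    Set.range (fun j : Fin (n-k) => σ ⟨k+1+j.val, by omega⟩) =
      ↑((Finset.univ.erase (Fin.last n)) \ S) := by
  have hi := key_val_eq hkey hk
  ext x
  simp only [Set.mem_range, Finset.mem_coe, Finset.mem_sdiff, Finset.mem_erase,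
    Finset.mem_univ, and_true]
  have hS : x ∈ S ↔ (σ.symm x).val < k := by rw [← hkey, mem_key, Fin.lt_def, hi]
  have hlast : x = Fin.last n ↔ (σ.symm x).val = k := by
    constructor
    · rintro rfl; rw [hi]
    · intro h
      have : σ.symm x = σ.symm (Fin.last n) := Fin.ext (by rw [h, hi])
      exact σ.symm.injective this
  constructor
  · rintro ⟨j, rfl⟩
    set y := σ ⟨k+1+j.val, by omega⟩ with hy
    have hyv : (σ.symm y).val = k + 1 + j.val := by rw [hy, Equiv.symm_apply_apply]
    constructor
    · rw [Ne, hlast, hyv]; omega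
    · rw [hS, hyv]; omega
  · rintro ⟨h1, h2⟩
    rw [Ne, hlast] at h1
    rw [hS] at h2
    have hyl : (σ.symm x).val < n + 1 := (σ.symm x).isLt
    refine ⟨⟨(σ.symm x).val - (k+1), by omega⟩, ?_⟩
    have : (⟨k+1+((σ.symm x).val - (k+1)), by omega⟩ : Fin (n+1)) = σ.symm x :=
      Fin.ext (by simp; omega)
    rw [this, Equiv.apply_symm_apply]

lemma alt_left {σ : Equiv.Perm (Fin (n+1))} (hσ : IsAlternating σ) (hkn : k ≤ n) :
    AltF (fun j : Fin k => σ ⟨j.val, by omega⟩) := by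
  intro j hj
  exact hσ j (by omega)

lemma alt_right {σ : Equiv.Perm (Fin (n+1))} (hσ : IsAlternating σ) (hkodd : Odd k)
    (hkn : k ≤ n) :
    AltF (fun j : Fin (n-k) => σ ⟨k+1+j.val, by omega⟩) := by
  intro j hj
  have hk2 := Nat.odd_iff.mp hkodd
  have h2 : (k+1+j) + 1 < n + 1 := by omega
  have hpar : Even (k+1+j) ↔ Even j := by rw [Nat.even_iff, Nat.even_iff]; omega
  have h3 := hσ (k+1+j) h2
  constructor
  · intro hej
    exact h3.1 (hpar.mpr hej)
  · intro hej
    exact h3.2 (fun he => hej (hpar.mp he))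

end Fiber

section Glue

variable {n k : ℕ} {S : Finset (Fin (n+1))}

/-- glue two sequences with the max in between -/
def glue (k : ℕ) {n : ℕ} (f₁ : Fin k → Fin (n+1)) (f₂ : Fin (n-k) → Fin (n+1)) :
    Fin (n+1) → Fin (n+1) :=
  fun p => if h : p.val < k then f₁ ⟨p.val, h⟩
    else if h2 : k < p.val then f₂ ⟨p.val - (k+1), by omega⟩
    else Fin.last n

variable {f₁ : Fin k → Fin (n+1)} {f₂ : Fin (n-k) → Fin (n+1)}

lemma glue_lt {p : Fin (n+1)} (hp : p.val < k) : glue k f₁ f₂ p = f₁ ⟨p.val, hp⟩ :=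
  dif_pos hp

lemma glue_eq {p : Fin (n+1)} (hp : p.val = k) : glue k f₁ f₂ p = Fin.last n := by
  rw [glue, dif_neg (by omega), dif_neg (by omega)]

lemma glue_gt {p : Fin (n+1)} (hp : k < p.val) :
    glue k f₁ f₂ p = f₂ ⟨p.val - (k+1), by omega⟩ := by
  rw [glue, dif_neg (by omega), dif_pos hp]

lemma glue_inj (hlast : Fin.last n ∉ S) (hk : S.card = k) (hkn : k ≤ n)
    (hr₁ : Set.range f₁ = ↑S)
    (hr₂ : Set.range f₂ = ↑((Finset.univ.erase (Fin.last n)) \ S)) :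
    Function.Injective (glue k f₁ f₂) := by
  classical
  have hinj₁ : Function.Injective f₁ := inj_of_range f₁ S hr₁ hk
  have hS' : ((Finset.univ.erase (Fin.last n)) \ S).card = n - k := by
    rw [Finset.card_sdiff_of_subset (Finset.subset_erase.mpr ⟨Finset.subset_univ S, hlast⟩),
      Finset.card_erase_of_mem (Finset.mem_univ _), Finset.card_univ, Fintype.card_fin, hk]
    omega
  have hinj₂ : Function.Injective f₂ := inj_of_range f₂ _ hr₂ hS'
  have hm₁ : ∀ z, f₁ z ∈ S := fun z => by
    have : f₁ z ∈ Set.range f₁ := Set.mem_range_self z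
    rwa [hr₁] at this
  have hm₂ : ∀ z, f₂ z ≠ Fin.last n ∧ f₂ z ∉ S := fun z => by
    have : f₂ z ∈ Set.range f₂ := Set.mem_range_self z
    rw [hr₂] at this
    simp only [Finset.coe_sdiff, Finset.coe_erase, Set.mem_diff, Set.mem_diff,
      Finset.mem_coe, Finset.coe_univ] at this
    tauto
  intro a b hab
  rcases lt_trichotomy a.val k with ha | ha | ha <;>
    rcases lt_trichotomy b.val k with hb | hb | hb
  · rw [glue_lt ha, glue_lt hb] at hab
    have := hinj₁ hab
    exact Fin.ext (congrArg Fin.val this : _)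
  · rw [glue_lt ha, glue_eq hb] at hab
    exact absurd (hab ▸ hm₁ _) hlast
  · rw [glue_lt ha, glue_gt hb] at hab
    exact absurd (hab ▸ hm₁ _) (hm₂ _).2
  · rw [glue_eq ha, glue_lt hb] at hab
    exact absurd (hab.symm ▸ hm₁ _) hlast
  · exact Fin.ext (by omega)
  · rw [glue_eq ha, glue_gt hb] at hab
    exact absurd hab.symm (hm₂ _).1
  · rw [glue_gt ha, glue_lt hb] at hab
    exact absurd (hab.symm ▸ hm₁ _) (hm₂ _).2
  · rw [glue_gt ha, glue_eq hb] at hab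
    exact absurd hab (hm₂ _).1
  · rw [glue_gt ha, glue_gt hb] at hab
    have := congrArg Fin.val (hinj₂ hab)
    simp only at this
    exact Fin.ext (by omega)

end Glue

section Glue2

variable {n k : ℕ} {S : Finset (Fin (n+1))}
variable {f₁ : Fin k → Fin (n+1)} {f₂ : Fin (n-k) → Fin (n+1)}

lemma glue_alt (hlast : Fin.last n ∉ S) (hkodd : Odd k) (hkn : k ≤ n)
    (hr₁ : Set.range f₁ = ↑S) (ha₁ : AltF f₁)
    (hr₂ : Set.range f₂ = ↑((Finset.univ.erase (Fin.last n)) \ S)) (ha₂ : AltF f₂) :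
    AltF (glue k f₁ f₂) := by
  have hk2 := Nat.odd_iff.mp hkodd
  have hm₁ : ∀ z, f₁ z < Fin.last n := fun z => by
    have hz : f₁ z ∈ Set.range f₁ := Set.mem_range_self z
    rw [hr₁] at hz
    exact Fin.lt_last_iff_ne_last.mpr (fun he => hlast (he ▸ hz))
  have hm₂ : ∀ z, f₂ z < Fin.last n := fun z => by
    have hz : f₂ z ∈ Set.range f₂ := Set.mem_range_self z
    rw [hr₂] at hz
    simp only [Finset.coe_sdiff, Finset.coe_erase, Set.mem_diff, Finset.coe_univ,
      Finset.mem_coe] at hz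
    exact Fin.lt_last_iff_ne_last.mpr (fun he => by
      rcases hz with ⟨⟨_, hne⟩, _⟩
      exact hne he)
  intro j hj
  rcases Nat.lt_trichotomy (j+1) k with hc | hc | hc
  · constructor
    · intro he
      rw [glue_lt (p := ⟨j, by omega⟩) (show j < k by omega),
        glue_lt (p := ⟨j+1, hj⟩) (show j + 1 < k from hc)]
      exact (ha₁ j hc).1 he
    · intro he
      rw [glue_lt (p := ⟨j, by omega⟩) (show j < k by omega),
        glue_lt (p := ⟨j+1, hj⟩) (show j + 1 < k from hc)]
      exact (ha₁ j hc).2 he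
  · constructor
    · intro he
      rw [glue_lt (p := ⟨j, by omega⟩) (show j < k by omega),
        glue_eq (p := ⟨j+1, hj⟩) (show j + 1 = k from hc)]
      exact hm₁ _
    · intro ho
      exact absurd (Nat.even_iff.mpr (by omega)) ho
  · rcases Nat.eq_or_lt_of_le (Nat.lt_succ_iff.mp hc) with hkj | hgt
    · constructor
      · intro he
        exfalso
        rw [Nat.even_iff] at he
        omega
      · intro ho
        rw [glue_eq (p := ⟨j, by omega⟩) (show j = k from hkj.symm),
          glue_gt (p := ⟨j+1, hj⟩) (show k < j + 1 by omega)]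
        exact hm₂ _
    · have e1 : glue k f₁ f₂ ⟨j, by omega⟩ = f₂ ⟨j - (k+1), by omega⟩ := glue_gt hgt
      have e2 : glue k f₁ f₂ ⟨j+1, hj⟩ = f₂ ⟨(j - (k+1)) + 1, by omega⟩ := by
        rw [glue_gt (p := ⟨j+1, hj⟩) (show k < j + 1 by omega)]
        exact congrArg f₂ (Fin.ext (by simp; omega))
      have h3 := ha₂ (j - (k+1)) (by omega)
      have hpar : Even (j - (k+1)) ↔ Even j := by
        rw [Nat.even_iff, Nat.even_iff]; omega
      constructor
      · intro he
        rw [e1, e2]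
        exact h3.1 (hpar.mpr he)
      · intro ho
        rw [e1, e2]
        exact h3.2 (fun he => ho (hpar.mp he))

end Glue2

section FiberCard

open Finset

variable {n k : ℕ} {S : Finset (Fin (n+1))}

lemma card_compl (hlast : Fin.last n ∉ S) (hk : S.card = k) :
    ((Finset.univ.erase (Fin.last n)) \ S).card = n - k := by
  classical
  rw [Finset.card_sdiff_of_subset (Finset.subset_erase.mpr ⟨Finset.subset_univ S, hlast⟩),
    Finset.card_erase_of_mem (Finset.mem_univ _), Finset.card_univ, Fintype.card_fin, hk]
  omega

lemma fiber_card_odd (hlast : Fin.last n ∉ S) (hk : S.card = k) (hkodd : Odd k)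
    (hkn : k ≤ n) :
    Nat.card {σ : Equiv.Perm (Fin (n+1)) // IsAlternating σ ∧ key σ = S} =
      altCount k * altCount (n - k) := by
  classical
  rw [← card_altF S hk, ← card_altF _ (card_compl hlast hk), ← Nat.card_prod]
  refine Nat.card_eq_of_bijective (fun σp =>
    (⟨fun j : Fin k => σp.1 ⟨j.val, by omega⟩,
        range_left σp.2.2 hk hkn, alt_left σp.2.1 hkn⟩,
     ⟨fun j : Fin (n-k) => σp.1 ⟨k+1+j.val, by omega⟩,
        range_right σp.2.2 hk hkn, alt_right σp.2.1 hkodd hkn⟩)) ⟨?_, ?_⟩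
  · -- injective
    rintro ⟨σ, hσ, hkσ⟩ ⟨τ, hτ, hkτ⟩ h
    simp only [Prod.mk.injEq, Subtype.mk.injEq] at h
    obtain ⟨h1, h2⟩ := h
    apply Subtype.ext
    apply Equiv.ext
    intro p
    rcases Nat.lt_trichotomy p.val k with hlt | heq | hgt
    · exact congrFun h1 ⟨p.val, hlt⟩
    · have hp : p = (⟨k, by omega⟩ : Fin (n+1)) := Fin.ext heq
      rw [hp, apply_k hkσ hk hkn, apply_k hkτ hk hkn]
    · have e : p = (⟨k+1+(p.val-(k+1)), by omega⟩ : Fin (n+1)) :=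
        Fin.ext (by simp; omega)
      rw [e]
      exact congrFun h2 ⟨p.val - (k+1), by omega⟩
  · -- surjective
    rintro ⟨⟨f₁, hr₁, ha₁⟩, ⟨f₂, hr₂, ha₂⟩⟩
    have hinj := glue_inj hlast hk hkn hr₁ hr₂
    set σ : Equiv.Perm (Fin (n+1)) :=
      Equiv.ofBijective _ (Finite.injective_iff_bijective.mp hinj) with hσdef
    have hσcoe : ⇑σ = glue k f₁ f₂ := rfl
    have halt : IsAlternating σ := by
      rw [isAlternating_iff_altF, hσcoe]
      exact glue_alt hlast hkodd hkn hr₁ ha₁ hr₂ ha₂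
    have hsymmk : σ.symm (Fin.last n) = ⟨k, by omega⟩ := by
      apply σ.injective
      rw [Equiv.apply_symm_apply]
      exact (glue_eq (p := (⟨k, by omega⟩ : Fin (n+1))) rfl).symm
    have hleft : ∀ (j : ℕ) (hj : j < k), σ ⟨j, by omega⟩ = f₁ ⟨j, hj⟩ :=
      fun j hj => glue_lt (p := ⟨j, by omega⟩) hj
    have hright : ∀ (j : ℕ) (hj : j < n - k), σ ⟨k+1+j, by omega⟩ = f₂ ⟨j, hj⟩ := by
      intro j hj
      have hb : k + 1 + j < n + 1 := by omega
      have hc : k + 1 + j - (k + 1) < n - k := by omega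
      have step : σ ⟨k+1+j, hb⟩ = f₂ ⟨k+1+j-(k+1), hc⟩ :=
        glue_gt (p := ⟨k+1+j, hb⟩) (show k < k+1+j by omega)
      rw [step]
      exact congrArg f₂ (Fin.ext (show k+1+j-(k+1) = j by omega))
    have hkeyσ : key σ = S := by
      ext x
      rw [mem_key, hsymmk]
      have hx : x ∈ S ↔ x ∈ Set.range f₁ := by rw [hr₁]; exact Finset.mem_coe.symm
      rw [hx, Fin.lt_def]
      constructor
      · intro h
        refine ⟨⟨(σ.symm x).val, h⟩, ?_⟩
        rw [← hleft (σ.symm x).val h]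
        exact congrArg _ (Fin.ext rfl) |>.trans (Equiv.apply_symm_apply σ x)
      · rintro ⟨j, rfl⟩
        rw [← hleft j.val j.isLt, Equiv.symm_apply_apply]
        exact j.isLt
    refine ⟨⟨σ, halt, hkeyσ⟩, ?_⟩
    apply Prod.ext
    · apply Subtype.ext
      funext j
      exact (hleft j.val j.isLt).trans (congrArg f₁ (Fin.ext rfl))
    · apply Subtype.ext
      funext j
      exact (hright j.val j.isLt).trans (congrArg f₂ (Fin.ext rfl))

end FiberCard

section Rec

open Finset

lemma altCount_rec {n : ℕ} (hn : Even n) (h0 : 0 < n) :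
    altCount (n+1) = ∑ k ∈ Finset.range (n+1),
      if Odd k then n.choose k * altCount k * altCount (n-k) else 0 := by
  classical
  have hA : altCount (n+1) =
      (Finset.univ.filter (fun σ : Equiv.Perm (Fin (n+1)) => IsAlternating σ)).card := by
    rw [altCount, Nat.card_eq_fintype_card, Fintype.card_subtype]
  have hmaps : ∀ σ ∈ Finset.univ.filter (fun σ : Equiv.Perm (Fin (n+1)) => IsAlternating σ),
      key σ ∈ (Finset.univ.erase (Fin.last n)).powerset := by
    intro σ hσ
    rw [Finset.mem_powerset]
    intro x hx
    rw [Finset.mem_erase]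
    refine ⟨?_, Finset.mem_univ x⟩
    rintro rfl
    exact last_not_mem_key σ hx
  have hucard : (Finset.univ.erase (Fin.last n)).card = n := by
    rw [Finset.card_erase_of_mem (Finset.mem_univ _), Finset.card_univ, Fintype.card_fin]
    omega
  rw [hA, Finset.card_eq_sum_card_fiberwise hmaps]
  have hfiber : ∀ S ∈ (Finset.univ.erase (Fin.last n)).powerset,
      ((Finset.univ.filter (fun σ : Equiv.Perm (Fin (n+1)) => IsAlternating σ)).filter
        (fun σ => key σ = S)).card
      = if Odd S.card then altCount S.card * altCount (n - S.card) else 0 := by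
    intro S hS
    rw [Finset.mem_powerset] at hS
    have hlast : Fin.last n ∉ S := fun h => (Finset.mem_erase.mp (hS h)).1 rfl
    have hkn : S.card ≤ n := by
      have := Finset.card_le_card hS
      omega
    rw [Finset.filter_filter]
    by_cases hodd : Odd S.card
    · rw [if_pos hodd, ← fiber_card_odd hlast rfl hodd hkn, Nat.card_eq_fintype_card,
        Fintype.card_subtype]
    · rw [if_neg hodd, Finset.card_eq_zero, Finset.filter_eq_empty_iff]
      rintro σ - hone
      apply hodd
      rw [← hone.2, card_key]
      exact pos_max_odd hn h0 hone.1
  rw [Finset.sum_congr rfl hfiber,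
    Finset.sum_powerset_apply_card (fun k => if Odd k then altCount k * altCount (n-k) else 0),
    hucard]
  apply Finset.sum_congr rfl
  intro k hk
  rw [smul_eq_mul, mul_ite, mul_zero, ← mul_assoc]

lemma altCount_one : altCount 1 = 1 := by
  classical
  have hall : ∀ σ : Equiv.Perm (Fin 1), IsAlternating σ := fun σ i h => absurd h (by omega)
  rw [altCount, Nat.card_eq_fintype_card, Fintype.card_subtype]
  rw [Finset.filter_true_of_mem (fun σ _ => hall σ), Finset.card_univ]
  simp

end Rec


theorem altEgf_deriv : PowerSeries.derivativeFun altEgf = 1 + altEgf ^ 2 := by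
  ext n
  rw [show altEgf.derivativeFun = PowerSeries.derivative ℚ altEgf from rfl,
    PowerSeries.coeff_derivativeFun, map_add, sq, PowerSeries.coeff_mul]
  simp only [altEgf, PowerSeries.coeff_mk, PowerSeries.coeff_one]
  rcases Nat.even_or_odd n with hn | hn
  · rcases Nat.eq_zero_or_pos n with rfl | h0
    · norm_num [altCount_one]
    · have h1 : Odd (n+1) := Even.add_one hn
      have hn2 := Nat.even_iff.mp hn
      rw [if_pos h1, if_neg (by omega), zero_add,
        Finset.Nat.sum_antidiagonal_eq_sum_range_succ_mk]
      have hL : ((altCount (n+1) : ℚ) / (Nat.factorial (n+1) : ℚ)) * ((n : ℚ) + 1)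
          = (altCount (n+1) : ℚ) / (Nat.factorial n : ℚ) := by
        rw [Nat.factorial_succ]
        have hne : ((Nat.factorial n : ℚ)) ≠ 0 := by
          exact_mod_cast Nat.factorial_ne_zero n
        push_cast
        field_simp
      rw [hL, altCount_rec hn h0]
      push_cast [apply_ite (Nat.cast : ℕ → ℚ)]
      rw [Finset.sum_div]
      apply Finset.sum_congr rfl
      intro k hk
      rw [Finset.mem_range] at hk
      have hkn : k ≤ n := by omega
      by_cases hko : Odd k
      · have hk2 := Nat.odd_iff.mp hko
        have h2 : Odd (n - k) := Nat.odd_iff.mpr (by omega)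
        rw [if_pos hko, if_pos hko, if_pos h2]
        have hfact : ((n.choose k : ℚ)) * (Nat.factorial k : ℚ) * (Nat.factorial (n-k) : ℚ)
            = (Nat.factorial n : ℚ) := by
          exact_mod_cast Nat.choose_mul_factorial_mul_factorial hkn
        have h3 : ((Nat.factorial k : ℚ)) ≠ 0 := by exact_mod_cast Nat.factorial_ne_zero k
        have h4 : ((Nat.factorial (n-k) : ℚ)) ≠ 0 := by
          exact_mod_cast Nat.factorial_ne_zero (n-k)
        have h5 : ((Nat.factorial n : ℚ)) ≠ 0 := by exact_mod_cast Nat.factorial_ne_zero n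
        rw [div_mul_div_comm, div_eq_div_iff h5 (by positivity)]
        linear_combination ((altCount k : ℚ) * (altCount (n-k) : ℚ)) * hfact
      · rw [if_neg hko, if_neg hko, zero_div, zero_mul]
  · have hne : ¬ Odd (n + 1) := by
      rw [Nat.not_odd_iff_even, Nat.even_add_one, Nat.not_even_iff_odd]
      exact hn
    rw [if_neg hne, if_neg (by rintro rfl; have := Nat.odd_iff.mp hn; omega), zero_mul,
      zero_add]
    symm
    apply Finset.sum_eq_zero
    intro p hp
    have hps : p.1 + p.2 = n := Finset.HasAntidiagonal.mem_antidiagonal.mp hp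
    rcases Nat.even_or_odd p.1 with he | ho
    · rw [if_neg (Nat.not_odd_iff_even.mpr he), zero_mul]
    · have : ¬ Odd p.2 := by
        rw [Nat.not_odd_iff_even, Nat.even_iff]
        have := Nat.odd_iff.mp ho
        have := Nat.odd_iff.mp hn
        omega
      rw [if_neg this, mul_zero]
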